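/- Let d ≥ j_1 ≥ j_2 ≥ ... ≥ j_h ≥ 1 and let X_{j_1}, ..., X_{j_h} ⊂ F_q^s be sets of cardinalities j_1, ..., j_h. Let a_1, ..., a_h ∈ F_q^{r−s} be such that the h × h matrix M with rows (1, a_{i,1}, ..., a_{i,h−1}) is invertible. Then the number of s-tuples (F_1, ..., F_s) of polynomials of degree at most d in F_q[X_1, ..., X_r] satisfying F_k(a_i, x) = 0 for all x ∈ X_{j_i}, all 1 ≤ i ≤ h and 1 ≤ k ≤ s, equals q^{s(dim F_d − (j_1 + ... + j_h))}, where dim F_d = C(d+r, r). -/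

import Mathlib

lemma aux_sum_count {α : Type*} [Fintype α] [DecidableEq α] (m : Multiset α) :
    ∑ a : α, m.count a = Multiset.card m := by
  rw [← Multiset.toFinset_sum_count_eq m]
  exact (Finset.sum_subset (Finset.subset_univ _)
    (fun a _ ha => by simpa [Multiset.count_eq_zero] using ha)).symm

noncomputable def degEquivSym (r d : ℕ) :
    {f : Fin r →₀ ℕ // (f.sum fun _ e => e) ≤ d} ≃ Sym (Option (Fin r)) d where
  toFun f := ⟨(Finsupp.toMultiset f.1).map some +
      Multiset.replicate (d - (Finsupp.toMultiset f.1).card) none, by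
    have h1 : (Finsupp.toMultiset f.1).card = f.1.sum fun _ e => e := Finsupp.card_toMultiset f.1
    have := f.2
    simp only [Sym, Multiset.card_add, Multiset.card_map, Multiset.card_replicate]
    omega⟩
  invFun m := ⟨Finsupp.equivFunOnFinite.symm fun i => m.1.count (some i), by
    rw [Finsupp.sum_fintype _ _ (fun _ => rfl)]
    simp only [Finsupp.coe_equivFunOnFinite_symm]
    have h2 := aux_sum_count m.1
    rw [Fintype.sum_option] at h2
    have h3 : Multiset.card m.1 = d := m.2
    omega⟩
  left_inv f := by
    ext i
    simp [Multiset.count_map_eq_count' _ _ (Option.some_injective _),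
      Multiset.count_replicate, Finsupp.count_toMultiset]
  right_inv m := by
    ext x
    cases x with
    | some i =>
        simp [Multiset.count_map_eq_count' _ _ (Option.some_injective _),
          Multiset.count_replicate, Finsupp.count_toMultiset]
    | none =>
        have h3 : Multiset.card (m : Multiset (Option (Fin r))) = d := m.2
        have h2 : Multiset.count none (m : Multiset (Option (Fin r)))
            + ∑ i : Fin r, Multiset.count (some i) (m : Multiset (Option (Fin r))) = d := by
          have h := aux_sum_count (m : Multiset (Option (Fin r)))
          rw [Fintype.sum_option, h3] at h
          exact h
        have h5 : Multiset.card (Finsupp.toMultiset (Finsupp.equivFunOnFinite.symm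
            fun i => Multiset.count (some i) (m : Multiset (Option (Fin r)))))
            = ∑ i : Fin r, Multiset.count (some i) (m : Multiset (Option (Fin r))) := by
          rw [Finsupp.card_toMultiset, Finsupp.sum_fintype _ _ (fun _ => rfl)]
          rfl
        dsimp only [Sym.val_eq_coe, Sym.coe_mk] at h5 ⊢
        rw [Multiset.count_add, Multiset.count_eq_zero_of_notMem (by simp), zero_add,
          Multiset.count_replicate, if_pos rfl, h5]
        omega

lemma finrank_rtd (Fq : Type*) [Field Fq] (r d : ℕ) :
    Module.finrank Fq (MvPolynomial.restrictTotalDegree (Fin r) Fq d) = (d + r).choose r := by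
  classical
  let B : Module.Basis {n : Fin r →₀ ℕ | (n.sum fun _ e => e) ≤ d} Fq
      (MvPolynomial.restrictTotalDegree (Fin r) Fq d) :=
    MvPolynomial.basisRestrictSupport Fq _
  let B' := B.reindex (degEquivSym r d)
  rw [Module.finrank_eq_card_basis B', Sym.card_sym_eq_choose]
  rw [Fintype.card_option, Fintype.card_fin]
  rw [show r + 1 + d - 1 = d + r by omega]
  exact Nat.choose_symm_add

lemma exists_separating (Fq : Type*) [Field Fq] [Fintype Fq]
    (r s d n : ℕ) (hs : 1 ≤ s) (hsr : s < r) (hn : n ≤ r - s)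
    (j : Fin (n + 1) → ℕ) (hj1 : ∀ i, 1 ≤ j i) (hjd : ∀ i, j i ≤ d)
    (X : (i : Fin (n + 1)) → Fin (j i) → (Fin s → Fq)) (hX : ∀ i, Function.Injective (X i))
    (a : Fin (n + 1) → (Fin (r - s) → Fq))
    (hM : (Matrix.of fun i : Fin (n + 1) =>
        Fin.cons (1 : Fq) (fun l : Fin n => a i (Fin.castLE hn l))).det ≠ 0)
    (i0 : Fin (n + 1)) (m0 : Fin (j i0)) :
    ∃ G : MvPolynomial (Fin r) Fq, G.totalDegree ≤ d ∧
      ∀ (i : Fin (n + 1)) (m : Fin (j i)),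
        MvPolynomial.eval (fun t : Fin r => Fin.append (a i) (X i m) (Fin.cast (Nat.sub_add_cancel hsr.le).symm t)) G
          = if (⟨i, m⟩ : Σ i, Fin (j i)) = ⟨i0, m0⟩ then 1 else 0 := by
  classical
  have hrs : r = r - s + s := by omega
  set pt : (i : Fin (n + 1)) → Fin (j i) → Fin r → Fq :=
    fun i m t => Fin.append (a i) (X i m) (Fin.cast hrs t) with hptdef
  set M : Matrix (Fin (n + 1)) (Fin (n + 1)) Fq := Matrix.of fun i : Fin (n + 1) =>
      Fin.cons (1 : Fq) (fun l : Fin n => a i (Fin.castLE hn l)) with hMdef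
  set c : Fin (n + 1) → Fq := M⁻¹.mulVec (Pi.single i0 1) with hcdef
  have hMc : M.mulVec c = Pi.single i0 1 := by
    rw [hcdef, Matrix.mulVec_mulVec, Matrix.mul_nonsing_inv _ (isUnit_iff_ne_zero.mpr hM),
      Matrix.one_mulVec]
  set ι1 : Fin (r - s) → Fin r := fun t => Fin.cast hrs.symm (Fin.castAdd s t) with hι1
  set ι2 : Fin s → Fin r := fun x => Fin.cast hrs.symm (Fin.natAdd (r - s) x) with hι2
  have hpt1 : ∀ (i : Fin (n + 1)) (m : Fin (j i)) (t : Fin (r - s)),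
      pt i m (ι1 t) = a i t := fun i m t => Fin.append_left _ _ t
  have hpt2 : ∀ (i : Fin (n + 1)) (m : Fin (j i)) (x : Fin s),
      pt i m (ι2 x) = X i m x := fun i m x => Fin.append_right _ _ x
  -- the linear polynomial separating the blocks
  set L : MvPolynomial (Fin r) Fq := MvPolynomial.C (c 0) +
      ∑ l : Fin n, MvPolynomial.C (c l.succ) * MvPolynomial.X (ι1 (Fin.castLE hn l)) with hLdef
  have hLdeg : L.totalDegree ≤ 1 := by
    refine le_trans (MvPolynomial.totalDegree_add _ _) (max_le (by simp) ?_)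
    refine le_trans (MvPolynomial.totalDegree_finset_sum _ _) (Finset.sup_le fun l _ => ?_)
    refine le_trans (MvPolynomial.totalDegree_mul _ _) ?_
    simp [MvPolynomial.totalDegree_X]
  have hLeval : ∀ (i : Fin (n + 1)) (m : Fin (j i)),
      MvPolynomial.eval (pt i m) L = Pi.single (M := fun _ => Fq) i0 1 i := by
    intro i m
    have h1 : MvPolynomial.eval (pt i m) L
        = c 0 + ∑ l : Fin n, c l.succ * a i (Fin.castLE hn l) := by
      simp [hLdef, hpt1]
    rw [h1, ← hMc]
    rw [show M.mulVec c i = ∑ t : Fin (n + 1), M i t * c t from rfl]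
    rw [Fin.sum_univ_succ]
    simp only [hMdef, Matrix.of_apply, Fin.cons_zero, Fin.cons_succ, one_mul]
    exact congrArg _ (Finset.sum_congr rfl fun l _ => mul_comm _ _)
  -- separating coordinates within the block i0
  have hk' : ∀ m' : Fin (j i0), ∃ kk : Fin s, m' ≠ m0 → X i0 m' kk ≠ X i0 m0 kk := by
    intro m'
    by_cases hm' : m' = m0
    · exact ⟨⟨0, hs⟩, fun h => absurd hm' h⟩
    · have : X i0 m' ≠ X i0 m0 := fun h => hm' (hX i0 h)
      obtain ⟨kk, hkk⟩ := Function.ne_iff.mp this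
      exact ⟨kk, fun _ => hkk⟩
  choose k hk using hk'
  set P : MvPolynomial (Fin r) Fq := ∏ m' ∈ Finset.univ.erase m0,
      (MvPolynomial.X (ι2 (k m')) + MvPolynomial.C (- X i0 m' (k m'))) with hPdef
  have hPdeg : P.totalDegree ≤ j i0 - 1 := by
    refine le_trans (MvPolynomial.totalDegree_finset_prod _ _) ?_
    have h1 : ∀ m' ∈ Finset.univ.erase m0,
        (MvPolynomial.X (σ := Fin r) (R := Fq) (ι2 (k m'))
          + MvPolynomial.C (- X i0 m' (k m'))).totalDegree ≤ 1 := by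
      intro m' _
      refine le_trans (MvPolynomial.totalDegree_add _ _) (max_le ?_ (by simp))
      simp [MvPolynomial.totalDegree_X]
    refine le_trans (Finset.sum_le_card_nsmul _ _ 1 h1) ?_
    simp [Finset.card_erase_of_mem]
  have hPeval : ∀ m : Fin (j i0), MvPolynomial.eval (pt i0 m) P
      = ∏ m' ∈ Finset.univ.erase m0, (X i0 m (k m') - X i0 m' (k m')) := by
    intro m
    rw [hPdef, map_prod]
    refine Finset.prod_congr rfl fun m' _ => ?_
    simp [hpt2, sub_eq_add_neg]
  have hP0 : ∀ m : Fin (j i0), m ≠ m0 → MvPolynomial.eval (pt i0 m) P = 0 := by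
    intro m hm
    rw [hPeval]
    exact Finset.prod_eq_zero (Finset.mem_erase.mpr ⟨hm, Finset.mem_univ m⟩) (sub_self _)
  have hPne : MvPolynomial.eval (pt i0 m0) P ≠ 0 := by
    rw [hPeval]
    refine Finset.prod_ne_zero_iff.mpr fun m' hm' => sub_ne_zero.mpr ?_
    exact (hk m' (Finset.mem_erase.mp hm').1).symm
  set e0 : Fq := MvPolynomial.eval (pt i0 m0) (L * P) with he0def
  have he0 : e0 ≠ 0 := by
    rw [he0def, map_mul, hLeval i0 m0, Pi.single_eq_same, one_mul]
    exact hPne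
  refine ⟨MvPolynomial.C e0⁻¹ * (L * P), ?_, ?_⟩
  · refine le_trans (MvPolynomial.totalDegree_mul _ _) ?_
    rw [MvPolynomial.totalDegree_C, zero_add]
    refine le_trans (MvPolynomial.totalDegree_mul _ _)
      (le_trans (add_le_add hLdeg hPdeg) ?_)
    have := hj1 i0
    have := hjd i0
    omega
  · intro i m
    show MvPolynomial.eval (pt i m) _ = _
    rw [map_mul, MvPolynomial.eval_C]
    by_cases hi : i = i0
    · subst hi
      by_cases hm : m = m0
      · subst hm
        rw [if_pos rfl, ← he0def, inv_mul_cancel₀ he0]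
      · rw [if_neg (by simp [Sigma.mk.inj_iff, hm]), map_mul, hP0 m hm, mul_zero, mul_zero]
    · rw [if_neg (by simp [Sigma.mk.inj_iff, hi]), map_mul, hLeval i m,
        Pi.single_eq_of_ne hi, zero_mul, mul_zero]

/-- With `d ≥ j_1 ≥ ⋯ ≥ j_h ≥ 1`, sets `X_{j_i} ⊆ F_q^s` of cardinality `j_i`, and
`a_1, …, a_h ∈ F_q^{r−s}` (here `h = n+1`) whose associated matrix with rows
`(1, a_{i,1}, …, a_{i,h−1})` is invertible, the number of `s`-tuples of polynomials of degree
at most `d` vanishing at all the corresponding points is `q^{s(C(d+r,r) − Σᵢ jᵢ)}`. -/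
theorem card_tuples_polynomials_vanishing (Fq : Type*) [Field Fq] [Fintype Fq]
    (r s d n : ℕ) (hs : 1 ≤ s) (hsr : s < r) (hn : n ≤ r - s)
    (j : Fin (n + 1) → ℕ) (hmono : Antitone j) (hj1 : ∀ i, 1 ≤ j i) (hjd : ∀ i, j i ≤ d)
    (X : (i : Fin (n + 1)) → Fin (j i) → (Fin s → Fq)) (hX : ∀ i, Function.Injective (X i))
    (a : Fin (n + 1) → (Fin (r - s) → Fq))
    (hM : (Matrix.of fun i : Fin (n + 1) =>
        Fin.cons (1 : Fq) (fun l : Fin n => a i (Fin.castLE hn l))).det ≠ 0) :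
    Nat.card {F : Fin s → MvPolynomial.restrictTotalDegree (Fin r) Fq d //
        ∀ (k : Fin s) (i : Fin (n + 1)) (m : Fin (j i)),
          MvPolynomial.eval
            (fun t : Fin r => Fin.append (a i) (X i m) (Fin.cast (by omega) t))
            (F k : MvPolynomial (Fin r) Fq) = 0} =
      Fintype.card Fq ^ (s * (Nat.choose (d + r) r - ∑ i, j i)) := by
  classical
  have hrs : r = r - s + s := by omega
  set W := MvPolynomial.restrictTotalDegree (Fin r) Fq d with hW
  let pt : (i : Fin (n + 1)) → Fin (j i) → Fin r → Fq :=
    fun i m t => Fin.append (a i) (X i m) (Fin.cast hrs t)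
  let E : W →ₗ[Fq] ((Σ i : Fin (n + 1), Fin (j i)) → Fq) :=
    LinearMap.pi fun q => (MvPolynomial.aeval (pt q.1 q.2)).toLinearMap.comp W.subtype
  have hE : ∀ (F : W) (q : Σ i : Fin (n + 1), Fin (j i)),
      E F q = MvPolynomial.eval (pt q.1 q.2) (F : MvPolynomial (Fin r) Fq) := fun F q => rfl
  have hrange : LinearMap.range E = ⊤ := by
    rw [eq_top_iff, ← (Pi.basisFun Fq (Σ i : Fin (n + 1), Fin (j i))).span_eq, Submodule.span_le]
    rintro _ ⟨q, rfl⟩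
    obtain ⟨G, hGdeg, hGval⟩ :=
      exists_separating Fq r s d n hs hsr hn j hj1 hjd X hX a hM q.1 q.2
    refine ⟨⟨G, (MvPolynomial.mem_restrictTotalDegree _ _ _).mpr hGdeg⟩, ?_⟩
    funext q'
    rw [hE, Pi.basisFun_apply, Pi.single_apply]
    have h := hGval q'.1 q'.2
    refine Eq.trans h ?_
    congr 1
  haveI : FiniteDimensional Fq W := by
    rw [hW]; infer_instance
  have hrn := LinearMap.finrank_range_add_finrank_ker E
  rw [hrange, finrank_top, Module.finrank_fintype_fun_eq_card, Fintype.card_sigma] at hrn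
  simp only [Fintype.card_fin] at hrn
  have hD : Module.finrank Fq W = (d + r).choose r := finrank_rtd Fq r d
  rw [hD] at hrn
  have hker : Module.finrank Fq (LinearMap.ker E) = (d + r).choose r - ∑ i, j i := by omega
  haveI : Finite W := Module.finite_of_finite Fq
  haveI : Finite (LinearMap.ker E) := Subtype.finite
  have hkcard : Nat.card (LinearMap.ker E)
      = Fintype.card Fq ^ ((d + r).choose r - ∑ i, j i) := by
    letI : Fintype (LinearMap.ker E) := Fintype.ofFinite _
    rw [Nat.card_eq_fintype_card, Module.card_eq_pow_finrank (K := Fq), hker]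
  have eqv : {F : Fin s → W //
      ∀ (k : Fin s) (i : Fin (n + 1)) (m : Fin (j i)),
        MvPolynomial.eval
          (fun t : Fin r => Fin.append (a i) (X i m) (Fin.cast (by omega) t))
          (F k : MvPolynomial (Fin r) Fq) = 0} ≃ (Fin s → LinearMap.ker E) :=
  { toFun := fun F k => ⟨F.1 k, by
      rw [LinearMap.mem_ker]
      funext q
      exact F.2 k q.1 q.2⟩
    invFun := fun F => ⟨fun k => (F k).1, fun k i m => by
      have h := (F k).2
      rw [LinearMap.mem_ker] at h
      exact congrFun h ⟨i, m⟩⟩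
    left_inv := fun F => rfl
    right_inv := fun F => rfl }
  rw [Nat.card_congr eqv, Nat.card_fun, hkcard, Nat.card_eq_fintype_card, Fintype.card_fin,
    ← pow_mul, Nat.mul_comm]
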